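/- A bijection g between two open proper convex cones is gauge-preserving (M(g(x)/g(y);C') = M(x/y;C) for all x,y) if and only if g is order-preserving, homogeneous of degree 1, and g^{-1} is order-preserving. -/

import Mathlib

section Aux
variable {V : Type*} [NormedAddCommGroup V] [NormedSpace ℝ V] {C : Set V}

lemma aux_smul_closure (hcone : ∀ c : ℝ, 0 < c → ∀ x ∈ C, c • x ∈ C)
    {c : ℝ} (hc : 0 < c) {v : V} (hv : v ∈ closure C) : c • v ∈ closure C :=
  map_mem_closure (continuous_const_smul c) hv (fun x hx => hcone c hc x hx)

lemma aux_add_closure (hconv : Convex ℝ C) (hcone : ∀ c : ℝ, 0 < c → ∀ x ∈ C, c • x ∈ C)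
    {a b : V} (ha : a ∈ closure C) (hb : b ∈ closure C) : a + b ∈ closure C := by
  have h := hconv.closure ha hb (by norm_num : (0:ℝ) ≤ 1/2) (by norm_num : (0:ℝ) ≤ 1/2)
    (by norm_num)
  have h2 := aux_smul_closure hcone (by norm_num : (0:ℝ) < 2) h
  have he : (2:ℝ) • ((1/2:ℝ) • a + (1/2:ℝ) • b) = a + b := by module
  rwa [he] at h2

lemma aux_zero_mem (hcone : ∀ c : ℝ, 0 < c → ∀ x ∈ C, c • x ∈ C) (hne : C.Nonempty) :
    (0:V) ∈ closure C := by
  obtain ⟨x, hx⟩ := hne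
  have h1 : Filter.Tendsto (fun n : ℕ => (1/((n:ℝ)+1)) • x) Filter.atTop (nhds 0) := by
    simpa using (tendsto_one_div_add_atTop_nhds_zero_nat (𝕜 := ℝ)).smul_const x
  exact mem_closure_of_tendsto h1 (Filter.Eventually.of_forall fun n =>
    hcone (1/((n:ℝ)+1)) (by positivity) x hx)

lemma aux_zero_not_mem (hopen : IsOpen C)
    (hproper : ∀ v ∈ closure C, -v ∈ closure C → v = 0)
    (hv : ∃ v : V, v ≠ 0) : (0:V) ∉ C := by
  intro h0
  obtain ⟨v, hv⟩ := hv
  obtain ⟨ε, hε, hball⟩ := Metric.isOpen_iff.mp hopen 0 h0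
  have hvn : 0 < ‖v‖ := norm_pos_iff.mpr hv
  set t : ℝ := ε / (2 * ‖v‖) with ht
  have htpos : 0 < t := by positivity
  have hmem : ∀ s : V, ‖s‖ = t * ‖v‖ → s ∈ C := by
    intro s hs
    apply hball
    simp only [Metric.mem_ball, dist_zero_right, hs, ht]
    rw [div_mul_eq_mul_div, mul_comm]
    rw [div_lt_iff₀ (by positivity)]
    nlinarith
  have h1 : t • v ∈ C := hmem _ (by rw [norm_smul, Real.norm_eq_abs, abs_of_pos htpos])
  have h2 : -(t • v) ∈ C := hmem _ (by rw [norm_neg, norm_smul, Real.norm_eq_abs, abs_of_pos htpos])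
  have := hproper _ (subset_closure h1) (subset_closure h2)
  exact hv (by simpa [smul_eq_zero, ne_of_gt htpos] using this)

lemma aux_gauge (hopen : IsOpen C) (hcone : ∀ c : ℝ, 0 < c → ∀ x ∈ C, c • x ∈ C)
    (hproper : ∀ v ∈ closure C, -v ∈ closure C → v = 0)
    (h0 : (0:V) ∉ C) {x y : V} (hx : x ∈ C) (hy : y ∈ C) :
    0 < sInf {l : ℝ | 0 < l ∧ l • y - x ∈ closure C} ∧
    (sInf {l : ℝ | 0 < l ∧ l • y - x ∈ closure C}) • y - x ∈ closure C := by
  set S := {l : ℝ | 0 < l ∧ l • y - x ∈ closure C} with hS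
  have hbdd : BddBelow S := ⟨0, fun l hl => le_of_lt hl.1⟩
  -- nonempty
  obtain ⟨ε, hε, hball⟩ := Metric.isOpen_iff.mp hopen y hy
  set l₀ : ℝ := ‖x‖ / ε + 1 with hl₀
  have hl₀pos : 0 < l₀ := by positivity
  have hmemball : y - l₀⁻¹ • x ∈ C := by
    apply hball
    simp only [Metric.mem_ball, dist_eq_norm]
    have : y - l₀⁻¹ • x - y = -(l₀⁻¹ • x) := by abel
    rw [this, norm_neg, norm_smul, Real.norm_eq_abs, abs_of_pos (by positivity)]
    rw [inv_mul_lt_iff₀ (by positivity), hl₀]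
    have : ‖x‖ / ε * ε = ‖x‖ := div_mul_cancel₀ _ (ne_of_gt hε)
    nlinarith [norm_nonneg x]
  have hSne : S.Nonempty := by
    refine ⟨l₀, hl₀pos, subset_closure ?_⟩
    have := hcone l₀ hl₀pos _ hmemball
    rwa [smul_sub, smul_inv_smul₀ (ne_of_gt hl₀pos)] at this
  -- S is closed
  have hSeq : S = {l : ℝ | 0 ≤ l} ∩ (fun l : ℝ => l • y - x) ⁻¹' closure C := by
    ext l
    constructor
    · rintro ⟨h1, h2⟩; exact ⟨le_of_lt h1, h2⟩
    · rintro ⟨h1, h2⟩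
      refine ⟨lt_of_le_of_ne h1 ?_, h2⟩
      rintro rfl
      simp only [Set.mem_preimage, zero_smul, zero_sub] at h2
      exact h0 (hproper x (subset_closure hx) h2 ▸ hx)
  have hSclosed : IsClosed S := by
    rw [hSeq]
    exact isClosed_Ici.inter (IsClosed.preimage
      ((continuous_id.smul continuous_const).sub continuous_const) isClosed_closure)
  have hmem : sInf S ∈ S := hSclosed.csInf_mem hSne hbdd
  exact ⟨hmem.1, hmem.2⟩


lemma aux_le_one_iff (hopen : IsOpen C) (hconv : Convex ℝ C) (hne : C.Nonempty)
    (hcone : ∀ c : ℝ, 0 < c → ∀ x ∈ C, c • x ∈ C)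
    (hproper : ∀ v ∈ closure C, -v ∈ closure C → v = 0)
    (h0 : (0:V) ∉ C) {x y : V} (hx : x ∈ C) (hy : y ∈ C) :
    y - x ∈ closure C ↔ sInf {l : ℝ | 0 < l ∧ l • y - x ∈ closure C} ≤ 1 := by
  have hbdd : BddBelow {l : ℝ | 0 < l ∧ l • y - x ∈ closure C} :=
    ⟨0, fun l hl => le_of_lt hl.1⟩
  constructor
  · intro h
    exact csInf_le hbdd ⟨one_pos, by simpa using h⟩
  · intro h
    obtain ⟨hmpos, hmmem⟩ := aux_gauge hopen hcone hproper h0 hx hy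
    set m := sInf {l : ℝ | 0 < l ∧ l • y - x ∈ closure C} with hm
    have h2 : (1 - m) • y ∈ closure C := by
      rcases eq_or_lt_of_le h with h' | h'
      · rw [h']; simpa using aux_zero_mem hcone hne
      · exact subset_closure (hcone _ (by linarith) y hy)
    have he : (m • y - x) + (1 - m) • y = y - x := by module
    exact he ▸ aux_add_closure hconv hcone hmmem h2

lemma aux_self (hopen : IsOpen C) (hcone : ∀ c : ℝ, 0 < c → ∀ x ∈ C, c • x ∈ C)
    (hproper : ∀ v ∈ closure C, -v ∈ closure C → v = 0)
    (h0 : (0:V) ∉ C) {x : V} (hx : x ∈ C) :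
    sInf {l : ℝ | 0 < l ∧ l • x - x ∈ closure C} = 1 := by
  have hbdd : BddBelow {l : ℝ | 0 < l ∧ l • x - x ∈ closure C} :=
    ⟨0, fun l hl => le_of_lt hl.1⟩
  obtain ⟨hmpos, hmmem⟩ := aux_gauge hopen hcone hproper h0 hx hx
  set m := sInf {l : ℝ | 0 < l ∧ l • x - x ∈ closure C} with hm
  have hle : m ≤ 1 := csInf_le hbdd ⟨one_pos, by simp [aux_zero_mem hcone ⟨x, hx⟩]⟩
  rcases lt_or_eq_of_le hle with h' | h'
  · exfalso
    have h1 : (1 - m) • x ∈ closure C := subset_closure (hcone _ (by linarith) x hx)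
    have h2 : -((1 - m) • x) ∈ closure C := by
      have : -((1 - m) • x) = m • x - x := by module
      rwa [this]
    have := hproper _ h1 h2
    rw [smul_eq_zero] at this
    rcases this with h | h
    · linarith
    · exact h0 (h ▸ hx)
  · exact h'

lemma aux_smul_left (hopen : IsOpen C) (hcone : ∀ c : ℝ, 0 < c → ∀ x ∈ C, c • x ∈ C)
    (hproper : ∀ v ∈ closure C, -v ∈ closure C → v = 0)
    (h0 : (0:V) ∉ C) {x y : V} (hx : x ∈ C) (hy : y ∈ C) {c : ℝ} (hc : 0 < c) :
    sInf {l : ℝ | 0 < l ∧ l • y - c • x ∈ closure C} =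
      c * sInf {l : ℝ | 0 < l ∧ l • y - x ∈ closure C} := by
  have hbdd1 : BddBelow {l : ℝ | 0 < l ∧ l • y - c • x ∈ closure C} :=
    ⟨0, fun l hl => le_of_lt hl.1⟩
  have hbdd2 : BddBelow {l : ℝ | 0 < l ∧ l • y - x ∈ closure C} :=
    ⟨0, fun l hl => le_of_lt hl.1⟩
  obtain ⟨hmpos, hmmem⟩ := aux_gauge hopen hcone hproper h0 hx hy
  obtain ⟨hm'pos, hm'mem⟩ := aux_gauge hopen hcone hproper h0 (hcone c hc x hx) hy
  set m := sInf {l : ℝ | 0 < l ∧ l • y - x ∈ closure C} with hm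
  set m' := sInf {l : ℝ | 0 < l ∧ l • y - c • x ∈ closure C} with hm'
  have hle : m' ≤ c * m := by
    apply csInf_le hbdd1
    refine ⟨by positivity, ?_⟩
    have := aux_smul_closure hcone hc hmmem
    have he : c • (m • y - x) = (c * m) • y - c • x := by module
    rwa [he] at this
  have hge : m ≤ m' / c := by
    apply csInf_le hbdd2
    refine ⟨by positivity, ?_⟩
    have := aux_smul_closure hcone (show (0:ℝ) < c⁻¹ by positivity) hm'mem
    have he : c⁻¹ • (m' • y - c • x) = (m' / c) • y - x := by
      rw [smul_sub, smul_smul, smul_smul, inv_mul_cancel₀ (ne_of_gt hc), one_smul,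
        div_eq_inv_mul]
    rwa [he] at this
  rw [le_div_iff₀ hc] at hge
  linarith

end Aux

/-- A bijection `g` between two open proper convex cones is
gauge-preserving (`M(g(x)/g(y);C') = M(x/y;C)` for all `x, y ∈ C`) if and only
if `g` is order-preserving, homogeneous of degree `1`, and `g⁻¹` is
order-preserving.  Here `x ≤_C y` means `y − x ∈ closure C`, and
`M(x/y;C) := inf{λ > 0 : λ•y − x ∈ closure C}`. -/
theorem gaugePreserving_iff
    {V V' : Type*}
    [NormedAddCommGroup V] [NormedSpace ℝ V] [FiniteDimensional ℝ V]
    [NormedAddCommGroup V'] [NormedSpace ℝ V'] [FiniteDimensional ℝ V']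
    (C : Set V) (C' : Set V')
    (hopen : IsOpen C) (hconv : Convex ℝ C) (hne : C.Nonempty)
    (hcone : ∀ (c : ℝ), 0 < c → ∀ x ∈ C, c • x ∈ C)
    (hproper : ∀ v ∈ closure C, -v ∈ closure C → v = 0)
    (hopen' : IsOpen C') (hconv' : Convex ℝ C') (hne' : C'.Nonempty)
    (hcone' : ∀ (c : ℝ), 0 < c → ∀ x ∈ C', c • x ∈ C')
    (hproper' : ∀ v ∈ closure C', -v ∈ closure C' → v = 0)
    (M : V → V → ℝ) (hM : ∀ x y, M x y = sInf {l : ℝ | 0 < l ∧ l • y - x ∈ closure C})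
    (M' : V' → V' → ℝ)
    (hM' : ∀ x y, M' x y = sInf {l : ℝ | 0 < l ∧ l • y - x ∈ closure C'})
    (g : V → V') (hg : Set.BijOn g C C') :
    (∀ x ∈ C, ∀ y ∈ C, M' (g x) (g y) = M x y) ↔
    ((∀ x ∈ C, ∀ y ∈ C, y - x ∈ closure C → g y - g x ∈ closure C') ∧
     (∀ (c : ℝ), 0 < c → ∀ x ∈ C, g (c • x) = c • g x) ∧
     (∀ x ∈ C, ∀ y ∈ C, g y - g x ∈ closure C' → y - x ∈ closure C)) := by
  have hmap := hg.mapsTo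
  by_cases hsub : ∀ v : V, v = 0
  -- Degenerate case: `V` is a subsingleton.
  · obtain ⟨x0, hx0⟩ := hne
    have h0C : (0:V) ∈ C := hsub x0 ▸ hx0
    have hCeq : C = {0} := by
      ext z
      simp only [Set.mem_singleton_iff]
      exact ⟨fun _ => hsub z, fun h => h ▸ h0C⟩
    have hC' : C' = {g 0} := by
      rw [← hg.image_eq, hCeq, Set.image_singleton]
    have hsub' : ∀ w : V', w = 0 := by
      intro w
      obtain ⟨ε, hε, hball⟩ := Metric.isOpen_iff.mp hopen' (g 0) (hmap h0C)
      set t : ℝ := ε / (2 * (‖w‖ + 1)) with ht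
      have htpos : 0 < t := by positivity
      have hb : g 0 + t • w ∈ Metric.ball (g 0) ε := by
        simp only [Metric.mem_ball, dist_eq_norm, add_sub_cancel_left, norm_smul,
          Real.norm_eq_abs, abs_of_pos htpos, ht]
        rw [abs_of_pos (by positivity : (0:ℝ) < ε / (2 * (‖w‖ + 1)))]
        rw [div_mul_eq_mul_div, div_lt_iff₀ (by positivity)]
        nlinarith [norm_nonneg w]
      have := hball hb
      rw [hC', Set.mem_singleton_iff] at this
      have hzero : t • w = 0 := by
        have := congrArg (fun z => z - g 0) this
        simpa using this
      rcases smul_eq_zero.mp hzero with h | h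
      · exact absurd h (ne_of_gt htpos)
      · exact h
    have h0C' : (0:V') ∈ C' := by
      have := hmap h0C
      rwa [hsub' (g 0)] at this
    constructor
    · intro _
      refine ⟨?_, ?_, ?_⟩
      · intro x _ y _ _
        rw [hsub' (g y), hsub' (g x)]
        simpa using subset_closure h0C'
      · intro c hc x _
        rw [hsub' (g (c • x)), hsub' (g x), smul_zero]
      · intro x _ y _ _
        rw [hsub x, hsub y]
        simpa using subset_closure h0C
    · intro _ x hx y hy
      rw [hM, hM']
      have hset1 : {l : ℝ | 0 < l ∧ l • (g y) - g x ∈ closure C'} = Set.Ioi 0 := by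
        ext l
        simp [hsub' (g y), hsub' (g x), subset_closure h0C']
      have hset2 : {l : ℝ | 0 < l ∧ l • y - x ∈ closure C} = Set.Ioi 0 := by
        ext l
        simp [hsub y, hsub x, subset_closure h0C]
      rw [hset1, hset2]
  -- Main case: `V` contains a nonzero vector.
  · push_neg at hsub
    have h0C : (0:V) ∉ C := aux_zero_not_mem hopen hproper hsub
    have hsub' : ∃ w : V', w ≠ 0 := by
      by_contra h
      push_neg at h
      obtain ⟨v, hv⟩ := hsub
      obtain ⟨x0, hx0⟩ := hne
      obtain ⟨ε, hε, hball⟩ := Metric.isOpen_iff.mp hopen x0 hx0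
      have hvn : 0 < ‖v‖ := norm_pos_iff.mpr hv
      set t : ℝ := ε / (2 * ‖v‖) with ht
      have htpos : 0 < t := by positivity
      have hb : x0 + t • v ∈ C := by
        apply hball
        simp only [Metric.mem_ball, dist_eq_norm, add_sub_cancel_left, norm_smul,
          Real.norm_eq_abs, abs_of_pos htpos, ht]
        rw [abs_of_pos (by positivity : (0:ℝ) < ε / (2 * ‖v‖))]
        rw [div_mul_eq_mul_div, div_lt_iff₀ (by positivity)]
        nlinarith
      have hneq : x0 + t • v ≠ x0 := by
        intro hEq
        have : t • v = 0 := by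
          have := congrArg (fun z => z - x0) hEq
          simpa using this
        rcases smul_eq_zero.mp this with h' | h'
        · exact absurd h' (ne_of_gt htpos)
        · exact hv h'
      exact hneq (hg.injOn hb hx0 (by rw [h (g (x0 + t • v)), h (g x0)]))
    have h0C' : (0:V') ∉ C' := aux_zero_not_mem hopen' hproper' hsub'
    constructor
    · intro hgp
      refine ⟨?_, ?_, ?_⟩
      · intro x hx y hy h
        have h1 := (aux_le_one_iff hopen hconv hne hcone hproper h0C hx hy).mp h
        rw [← hM x y, ← hgp x hx y hy, hM'] at h1
        exact (aux_le_one_iff hopen' hconv' hne' hcone' hproper' h0C'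
          (hmap hx) (hmap hy)).mpr h1
      · intro c hc x hx
        have hcx : c • x ∈ C := hcone c hc x hx
        have hu : g (c • x) ∈ C' := hmap hcx
        have hw : c • g x ∈ C' := hcone' c hc _ (hmap hx)
        have key : ∀ v ∈ C',
            sInf {l : ℝ | 0 < l ∧ l • v - g (c • x) ∈ closure C'} =
            sInf {l : ℝ | 0 < l ∧ l • v - c • g x ∈ closure C'} := by
          intro v hv
          obtain ⟨y, hy, rfl⟩ := hg.surjOn hv
          calc sInf {l : ℝ | 0 < l ∧ l • (g y) - g (c • x) ∈ closure C'}
              = M' (g (c • x)) (g y) := (hM' _ _).symm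
            _ = M (c • x) y := hgp _ hcx y hy
            _ = c * M x y := by
                rw [hM, hM]
                exact aux_smul_left hopen hcone hproper h0C hx hy hc
            _ = c * M' (g x) (g y) := by rw [hgp x hx y hy]
            _ = sInf {l : ℝ | 0 < l ∧ l • (g y) - c • g x ∈ closure C'} := by
                rw [hM']
                exact (aux_smul_left hopen' hcone' hproper' h0C'
                  (hmap hx) (hmap hy) hc).symm
        have e1 := key _ hu
        have e2 := key _ hw
        rw [aux_self hopen' hcone' hproper' h0C' hu] at e1
        rw [aux_self hopen' hcone' hproper' h0C' hw] at e2
        have m1 : g (c • x) - c • g x ∈ closure C' :=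
          (aux_le_one_iff hopen' hconv' hne' hcone' hproper' h0C' hw hu).mpr (le_of_eq e1.symm)
        have m2 : c • g x - g (c • x) ∈ closure C' :=
          (aux_le_one_iff hopen' hconv' hne' hcone' hproper' h0C' hu hw).mpr (le_of_eq e2)
        have := hproper' _ m1 (by rwa [neg_sub])
        exact sub_eq_zero.mp this
      · intro x hx y hy h
        have h1 := (aux_le_one_iff hopen' hconv' hne' hcone' hproper' h0C'
          (hmap hx) (hmap hy)).mp h
        rw [← hM' (g x) (g y), hgp x hx y hy, hM] at h1
        exact (aux_le_one_iff hopen hconv hne hcone hproper h0C hx hy).mpr h1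
    · rintro ⟨h1, h2, h3⟩ x hx y hy
      rw [hM, hM']
      obtain ⟨hmpos, hmmem⟩ := aux_gauge hopen hcone hproper h0C hx hy
      obtain ⟨hm'pos, hm'mem⟩ := aux_gauge hopen' hcone' hproper' h0C' (hmap hx) (hmap hy)
      set m := sInf {l : ℝ | 0 < l ∧ l • y - x ∈ closure C} with hmdef
      set m' := sInf {l : ℝ | 0 < l ∧ l • (g y) - g x ∈ closure C'} with hm'def
      have hle : m' ≤ m := by
        apply csInf_le ⟨0, fun l hl => le_of_lt hl.1⟩
        refine ⟨hmpos, ?_⟩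
        have hmy : m • y ∈ C := hcone m hmpos y hy
        have hgm := h1 x hx (m • y) hmy hmmem
        rwa [h2 m hmpos y hy] at hgm
      have hge : m ≤ m' := by
        apply csInf_le ⟨0, fun l hl => le_of_lt hl.1⟩
        refine ⟨hm'pos, ?_⟩
        have hm'y : m' • y ∈ C := hcone m' hm'pos y hy
        have hgm : g (m' • y) - g x ∈ closure C' := by
          rw [h2 m' hm'pos y hy]; exact hm'mem
        exact h3 x hx (m' • y) hm'y hgm
      linarith
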